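/- The dual T–Q relation holds: for every u ∈ ℂ, Σ_{a=0}^{N+1} (−1)^a · T^a(u−a) · Q_1(u − 2a + g + s) = 0, where g := N+1 is the dual Coxeter number of A^(2)_{2n}. -/

import Mathlib

open Complex

noncomputable def oneSubXD (x w : ℂ → ℂ) : ℂ → ℂ := fun u => w u - x u * w (u + 2)

noncomputable def Lop (x : ℕ → ℂ → ℂ) : ℕ → (ℂ → ℂ) → (ℂ → ℂ)
  | 0 => fun w => w
  | k + 1 => fun w => oneSubXD (x (k + 1)) (Lop x k w)

/-- Expansion coefficients of `Lop`. -/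
noncomputable def cfun (x : ℕ → ℂ → ℂ) : ℕ → ℕ → ℂ → ℂ
  | 0, 0 => fun _ => 1
  | 0, _ + 1 => fun _ => 0
  | k + 1, 0 => cfun x k 0
  | k + 1, a + 1 => fun u => cfun x k (a + 1) u - x (k + 1) u * cfun x k a (u + 2)

/-- Adjoint operator. -/
noncomputable def Mop (x : ℕ → ℂ → ℂ) : ℕ → (ℂ → ℂ) → ℂ → ℂ
  | 0 => fun f => f
  | k + 1 => fun f => Mop x k (fun u => f u - x (k + 1) (u - 2) * f (u - 2))

lemma cfun_gt (x : ℕ → ℂ → ℂ) : ∀ k a, k < a → ∀ u, cfun x k a u = 0 := by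
  intro k
  induction k with
  | zero =>
    intro a ha u
    obtain ⟨b, rfl⟩ := Nat.exists_eq_add_of_lt ha
    simp [cfun]
  | succ k ih =>
    intro a ha u
    obtain ⟨b, rfl⟩ : ∃ b, a = b + 1 := ⟨a - 1, by omega⟩
    show cfun x k (b + 1) u - x (k + 1) u * cfun x k b (u + 2) = 0
    rw [ih (b + 1) (by omega), ih b (by omega)]
    ring

lemma lop_eq (x : ℕ → ℂ → ℂ) : ∀ k (w : ℂ → ℂ) (u : ℂ),
    Lop x k w u = ∑ a ∈ Finset.range (k + 1), cfun x k a u * w (u + 2 * a) := by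
  intro k
  induction k with
  | zero => intro w u; simp [Lop, cfun]
  | succ k ih =>
    intro w u
    have hA := ih w u
    have hB := ih w (u + 2)
    show Lop x k w u - x (k + 1) u * Lop x k w (u + 2) = _
    rw [hA, hB]
    rw [Finset.sum_range_succ' (fun a => cfun x (k + 1) a u * w (u + 2 * a)) (k + 1)]
    rw [Finset.sum_range_succ' (fun a => cfun x k a u * w (u + 2 * a)) k]
    have pad : ∑ a ∈ Finset.range (k + 1), cfun x k (a + 1) u * w (u + 2 * (↑(a + 1) : ℂ))
        = ∑ a ∈ Finset.range k, cfun x k (a + 1) u * w (u + 2 * (↑(a + 1) : ℂ)) := by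
      rw [Finset.sum_range_succ, cfun_gt x k (k + 1) (by omega)]; ring
    rw [← pad, Finset.mul_sum]
    have e1 : ∀ a ∈ Finset.range (k + 1),
        cfun x (k + 1) (a + 1) u * w (u + 2 * (↑(a + 1) : ℂ))
        = cfun x k (a + 1) u * w (u + 2 * (↑(a + 1) : ℂ))
          - x (k + 1) u * (cfun x k a (u + 2) * w (u + 2 + 2 * a)) := by
      intro a _
      have harg : (u + 2 + 2 * (a : ℂ)) = u + 2 * (↑(a + 1) : ℂ) := by push_cast; ring
      rw [harg]
      show (cfun x k (a + 1) u - x (k + 1) u * cfun x k a (u + 2)) * _ = _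
      ring
    rw [Finset.sum_congr rfl e1, Finset.sum_sub_distrib]
    show _ = _ - _ + cfun x k 0 u * w (u + 2 * ((0 : ℕ) : ℂ))
    ring

lemma mop_eq (x : ℕ → ℂ → ℂ) : ∀ k (f : ℂ → ℂ) (u : ℂ),
    Mop x k f u = ∑ a ∈ Finset.range (k + 1), cfun x k a (u - 2 * a) * f (u - 2 * a) := by
  intro k
  induction k with
  | zero => intro f u; simp [Mop, cfun]
  | succ k ih =>
    intro f u
    show Mop x k (fun v => f v - x (k + 1) (v - 2) * f (v - 2)) u = _
    rw [ih]
    rw [Finset.sum_range_succ' (fun a => cfun x (k + 1) a (u - 2 * a) * f (u - 2 * a)) (k + 1)]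
    have e1 : ∀ a ∈ Finset.range (k + 1),
        cfun x k a (u - 2 * a) * ((fun v => f v - x (k + 1) (v - 2) * f (v - 2)) (u - 2 * a))
        = cfun x k a (u - 2 * a) * f (u - 2 * a)
          - cfun x k a (u - 2 * a) * x (k + 1) (u - 2 * a - 2) * f (u - 2 * a - 2) := by
      intro a _; show cfun x k a (u - 2 * a) * (f (u - 2 * a) - _) = _; ring
    rw [Finset.sum_congr rfl e1, Finset.sum_sub_distrib]
    rw [Finset.sum_range_succ' (fun a => cfun x k a (u - 2 * a) * f (u - 2 * a)) k]
    have pad : ∑ a ∈ Finset.range (k + 1),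
        cfun x k (a + 1) (u - 2 * (↑(a + 1) : ℂ)) * f (u - 2 * (↑(a + 1) : ℂ))
        = ∑ a ∈ Finset.range k,
        cfun x k (a + 1) (u - 2 * (↑(a + 1) : ℂ)) * f (u - 2 * (↑(a + 1) : ℂ)) := by
      rw [Finset.sum_range_succ, cfun_gt x k (k + 1) (by omega)]; ring
    rw [← pad]
    have e2 : ∀ a ∈ Finset.range (k + 1),
        cfun x k a (u - 2 * a) * x (k + 1) (u - 2 * a - 2) * f (u - 2 * a - 2)
        = x (k + 1) (u - 2 * (↑(a + 1) : ℂ)) * cfun x k a (u - 2 * (↑(a + 1) : ℂ) + 2)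
          * f (u - 2 * (↑(a + 1) : ℂ)) := by
      intro a _
      have h1 : (u - 2 * (↑(a + 1) : ℂ)) = u - 2 * a - 2 := by push_cast; ring
      have h2 : (u - 2 * (↑(a + 1) : ℂ) + 2) = u - 2 * a := by push_cast; ring
      rw [h2, h1]; ring
    rw [Finset.sum_congr rfl e2]
    have e3 : ∀ a ∈ Finset.range (k + 1),
        cfun x (k + 1) (a + 1) (u - 2 * (↑(a + 1) : ℂ)) * f (u - 2 * (↑(a + 1) : ℂ))
        = cfun x k (a + 1) (u - 2 * (↑(a + 1) : ℂ)) * f (u - 2 * (↑(a + 1) : ℂ))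
          - x (k + 1) (u - 2 * (↑(a + 1) : ℂ)) * cfun x k a (u - 2 * (↑(a + 1) : ℂ) + 2)
            * f (u - 2 * (↑(a + 1) : ℂ)) := by
      intro a _
      show (cfun x k (a + 1) _ - x (k + 1) _ * cfun x k a _) * _ = _
      ring
    rw [Finset.sum_congr rfl e3, Finset.sum_sub_distrib,
      show cfun x (k + 1) 0 = cfun x k 0 from rfl]
    ring

lemma mop_zero (x : ℕ → ℂ → ℂ) : ∀ k (u : ℂ), Mop x k (fun _ => 0) u = 0 := by
  intro k
  induction k with
  | zero => intro u; rfl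
  | succ k ih =>
    intro u
    show Mop x k (fun v => (0 : ℂ) - x (k + 1) (v - 2) * 0) u = 0
    have : (fun v => (0 : ℂ) - x (k + 1) (v - 2) * 0) = (fun _ => (0 : ℂ)) := by
      funext v; ring
    rw [this, ih]

theorem dual_TQ_A2_even
    (n : ℕ) (hn : 1 ≤ n) (N : ℕ) (hN : N = 2 * n)
    (hbar : ℂ) (hbar_ne : hbar ≠ 0) (s : ℂ)
    (hs : s = (Real.pi : ℂ) * Complex.I / (2 * hbar))
    (Q : ℕ → ℂ → ℂ) (hQ0 : ∀ u, Q 0 u = 1)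
    (hQne : ∀ a, 1 ≤ a → a ≤ n → ∀ u, Q a u ≠ 0)
    (hconst : ℕ → ℂ)
    (hQper : ∀ a, 1 ≤ a → a ≤ n → hconst a ≠ 0 ∧
      ∀ u, Q a (u + (Real.pi : ℂ) * Complex.I / hbar) = hconst a * Q a u)
    (Y : ℕ → ℂ → ℂ) (hY : ∀ a u, Y a u = Q a (u - 1) / Q a (u + 1))
    (x : ℕ → ℂ → ℂ)
    (hxa : ∀ a, 1 ≤ a → a ≤ n → ∀ u : ℂ,
      x a u = Y a (u + a) / Y (a - 1) (u + a + 1))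
    (hx0 : ∀ u : ℂ, x (n + 1) u = Y n (u + n + 1 + s) / Y n (u + n + 2))
    (hxbar : ∀ a, 1 ≤ a → a ≤ n → ∀ u : ℂ,
      x (2 * n - a + 2) u = Y (a - 1) (u + 2 * (n : ℂ) - a + 2 + s)
        / Y a (u + 2 * (n : ℂ) - a + 3 + s))
    (T : ℤ → ℂ → ℂ)
    (hTneg : ∀ a : ℤ, a < 0 → ∀ u, T a u = 0)
    (hTbig : ∀ a : ℤ, (N : ℤ) + 1 < a → ∀ u, T a u = 0)
    (hTL : ∀ w : ℂ → ℂ, ∀ u : ℂ, Lop x (N + 1) w u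
      = ∑ a ∈ Finset.range (N + 2), (-1) ^ a * T a (u + a) * w (u + 2 * a))
    :
    ∀ u : ℂ, ∑ a ∈ Finset.range (N + 2),
      (-1) ^ a * T (a : ℤ) (u - a) * Q 1 (u - 2 * a + ((N : ℂ) + 1) + s) = 0 := by
  -- cast injectivity helper
  have hinj : ∀ (v : ℂ) (a b : ℕ), v + 2 * (a : ℂ) = v + 2 * (b : ℂ) → a = b := by
    intro v a b h
    have h2 : (2 : ℂ) * a = 2 * b := by linear_combination h
    have h3 : (a : ℂ) = b := by
      have := mul_left_cancel₀ (two_ne_zero (α := ℂ)) h2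
      exact this
    exact_mod_cast h3
  -- identify the expansion coefficients with the T's
  have cT : ∀ b ∈ Finset.range (N + 2), ∀ v : ℂ,
      cfun x (N + 1) b v = (-1) ^ b * T b (v + b) := by
    intro b hb v
    set w : ℂ → ℂ := fun z => if z = v + 2 * b then (1 : ℂ) else 0 with hw
    have h := (lop_eq x (N + 1) w v).symm.trans (hTL w v)
    rw [Finset.sum_eq_single b, Finset.sum_eq_single b] at h
    · simpa [hw] using h
    · intro a ha hab
      have : w (v + 2 * a) = 0 := by
        rw [hw]; simp only []
        rw [if_neg (fun hc => hab (hinj v a b hc))]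
      rw [this]; ring
    · intro hb'; exact absurd hb hb'
    · intro a ha hab
      have : w (v + 2 * a) = 0 := by
        rw [hw]; simp only []
        rw [if_neg (fun hc => hab (hinj v a b hc))]
      rw [this]; ring
    · intro hb'; exact absurd hb hb'
  -- the function killed by the innermost adjoint factor
  set f : ℂ → ℂ := fun v => Q 1 (v + ((N : ℂ) + 1) + s) with hf
  have hNc : (N : ℂ) = 2 * (n : ℂ) := by rw [hN]; push_cast; ring
  -- innermost factor kills f
  have hkill : (fun v => f v - x (N + 1) (v - 2) * f (v - 2)) = (fun _ => (0 : ℂ)) := by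
    funext v
    have hidx : 2 * n - 1 + 2 = N + 1 := by omega
    have hx' := hxbar 1 le_rfl hn (v - 2)
    rw [hidx] at hx'
    rw [hf]
    simp only []
    rw [hx', hY, hY, hQ0, hQ0]
    have a1 : v - 2 + 2 * (n : ℂ) - ((1 : ℕ) : ℂ) + 3 + s - 1 = v + 2 * (n : ℂ) - 1 + s := by
      push_cast; ring
    have a2 : v - 2 + 2 * (n : ℂ) - ((1 : ℕ) : ℂ) + 3 + s + 1 = v + 2 * (n : ℂ) + 1 + s := by
      push_cast; ring
    have a3 : v + ((N : ℂ) + 1) + s = v + 2 * (n : ℂ) + 1 + s := by rw [hNc]; ring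
    have a4 : v - 2 + ((N : ℂ) + 1) + s = v + 2 * (n : ℂ) - 1 + s := by rw [hNc]; ring
    rw [a1, a2, a3, a4]
    have hne1 : Q 1 (v + 2 * (n : ℂ) - 1 + s) ≠ 0 := hQne 1 le_rfl hn _
    have hne2 : Q 1 (v + 2 * (n : ℂ) + 1 + s) ≠ 0 := hQne 1 le_rfl hn _
    field_simp
    ring
  intro u
  have key : ∑ a ∈ Finset.range (N + 2),
      (-1) ^ a * T (a : ℤ) (u - a) * Q 1 (u - 2 * a + ((N : ℂ) + 1) + s)
      = Mop x (N + 1) f u := by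
    rw [mop_eq]
    apply Finset.sum_congr rfl
    intro a ha
    rw [cT a ha (u - 2 * a)]
    have harg : u - 2 * (a : ℂ) + a = u - a := by ring
    rw [harg, hf]
  rw [key]
  show Mop x N (fun v => f v - x (N + 1) (v - 2) * f (v - 2)) u = 0
  rw [hkill]
  exact mop_zero x N u
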